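/- Let d ≥ 0 and k ≥ d+1 be integers. If G is a d-degenerate graph, then the set of proper k-colourings of G forms a single Kempe class. -/

import Mathlib

open SimpleGraph
open scoped Classical

variable {V : Type*}

/-- A proper `k`-colouring of `G`. -/
def IsProperColoring (G : SimpleGraph V) (k : ℕ) (c : V → Fin k) : Prop :=
  ∀ ⦃u v : V⦄, G.Adj u v → c u ≠ c v

/-- `c'` is obtained from `c` by a single Kempe change: the colours `a` and `b` are
swapped on the connected component (of the subgraph induced by the vertices coloured
`a` or `b`) containing `v0`, and all other vertices keep their colour. -/

def KempeStep (G : SimpleGraph V) (k : ℕ) (c c' : V → Fin k) : Prop :=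
  ∃ a b : Fin k, ∃ v0 : {x : V | c x = a ∨ c x = b},
    ∀ v : V, c' v =
      if h : c v = a ∨ c v = b then
        if (G.induce {x : V | c x = a ∨ c x = b}).Reachable v0 ⟨v, h⟩
          then Equiv.swap a b (c v) else c v
      else c v

/-- Two colourings are Kempe equivalent if one is obtained from the other by a finite
sequence of Kempe changes. -/
def KempeEquiv (G : SimpleGraph V) (k : ℕ) (c c' : V → Fin k) : Prop :=
  Relation.ReflTransGen (KempeStep G k) c c'

/-- The set of all proper `k`-colourings of `G` forms a single Kempe class. -/
def KempeClass (G : SimpleGraph V) (k : ℕ) : Prop :=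
  ∀ c c' : V → Fin k, IsProperColoring G k c → IsProperColoring G k c' →
    KempeEquiv G k c c'

/-- `G` is `d`-degenerate: every nonempty set of vertices contains a vertex with at
most `d` neighbours inside the set. -/
def Degenerate (G : SimpleGraph V) (d : ℕ) : Prop :=
  ∀ S : Set V, S.Nonempty → ∃ v ∈ S, (S ∩ G.neighborSet v).ncard ≤ d

/-- `G` is 3-connected: more than 3 vertices, and deleting any at most 2 vertices
leaves it connected. -/
def ThreeConnected [Fintype V] (G : SimpleGraph V) : Prop :=
  3 < Fintype.card V ∧ ∀ S : Set V, S.ncard ≤ 2 → (G.induce Sᶜ).Connected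

/-! ### Auxiliary lemmas -/

lemma kempeStep_proper {G : SimpleGraph V} {k : ℕ} {c c' : V → Fin k}
    (hc : IsProperColoring G k c) (h : KempeStep G k c c') : IsProperColoring G k c' := by
  obtain ⟨a, b, v0, hc'⟩ := h
  intro u w hadj
  rw [hc' u, hc' w]
  by_cases hu : c u = a ∨ c u = b
  · by_cases hw : c w = a ∨ c w = b
    · have hiff : (G.induce {x | c x = a ∨ c x = b}).Reachable v0 ⟨u, hu⟩ ↔
          (G.induce {x | c x = a ∨ c x = b}).Reachable v0 ⟨w, hw⟩ := by
        constructor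
        · exact fun h => h.trans (SimpleGraph.Adj.reachable (by exact hadj))
        · exact fun h => h.trans (SimpleGraph.Adj.reachable (by exact hadj.symm))
      simp only [dif_pos hu, dif_pos hw]
      by_cases hr : (G.induce {x | c x = a ∨ c x = b}).Reachable v0 ⟨u, hu⟩
      · rw [if_pos hr, if_pos (hiff.mp hr)]
        exact fun hh => hc hadj (Equiv.injective _ hh)
      · rw [if_neg hr, if_neg (fun hh => hr (hiff.mpr hh))]
        exact hc hadj
    · simp only [dif_pos hu, dif_neg hw]
      split
      · intro hh
        apply hw
        rcases hu with h1 | h1 <;> rw [h1] at hh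
        · rw [Equiv.swap_apply_left] at hh; exact Or.inr hh.symm
        · rw [Equiv.swap_apply_right] at hh; exact Or.inl hh.symm
      · exact hc hadj
  · by_cases hw : c w = a ∨ c w = b
    · simp only [dif_neg hu, dif_pos hw]
      split
      · intro hh
        apply hu
        rcases hw with h1 | h1 <;> rw [h1] at hh
        · rw [Equiv.swap_apply_left] at hh; exact Or.inr hh
        · rw [Equiv.swap_apply_right] at hh; exact Or.inl hh
      · exact hc hadj
    · simp only [dif_neg hu, dif_neg hw]; exact hc hadj

lemma kempeEquiv_proper {G : SimpleGraph V} {k : ℕ} {c c' : V → Fin k}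
    (hc : IsProperColoring G k c) (h : KempeEquiv G k c c') : IsProperColoring G k c' := by
  induction h with
  | refl => exact hc
  | tail _ hstep ih => exact kempeStep_proper ih hstep

lemma reach_hom {V W : Type*} {G : SimpleGraph V} {H : SimpleGraph W} (f : V → W)
    (hf : ∀ a b, G.Adj a b → H.Adj (f a) (f b)) {x y : V} (h : G.Reachable x y) :
    H.Reachable (f x) (f y) :=
  SimpleGraph.Reachable.map ⟨f, fun h => hf _ _ h⟩ h

lemma transfer_down {G : SimpleGraph V} {v : V} {A : Set V} {A' : Set {x : V // x ≠ v}}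
    (hA : ∀ x : {x : V // x ≠ v}, x ∈ A' ↔ (x : V) ∈ A) {x y : ↥A}
    (p : (G.induce A).Walk x y) (hs : ∀ z ∈ p.support, (z : V) ≠ v) :
    ((G.induce {x | x ≠ v}).induce A').Reachable
      ⟨⟨x, hs x p.start_mem_support⟩, (hA _).mpr x.prop⟩
      ⟨⟨y, hs y p.end_mem_support⟩, (hA _).mpr y.prop⟩ := by
  induction p with
  | nil => exact Reachable.refl _
  | cons h p ih =>
    have hrest := ih (fun z hz => hs z
      (by rw [SimpleGraph.Walk.support_cons]; exact List.mem_cons_of_mem _ hz))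
    exact Reachable.trans (SimpleGraph.Adj.reachable (by exact h)) hrest

lemma transfer_up {G : SimpleGraph V} {v : V} {A : Set V} {A' : Set {x : V // x ≠ v}}
    (hA : ∀ x : {x : V // x ≠ v}, x ∈ A' ↔ (x : V) ∈ A) {x y : ↥A'}
    (h : ((G.induce {x | x ≠ v}).induce A').Reachable x y) :
    (G.induce A).Reachable ⟨(x : {x : V // x ≠ v}), (hA _).mp x.prop⟩
      ⟨(y : {x : V // x ≠ v}), (hA _).mp y.prop⟩ :=
  reach_hom (fun z : ↥A' => (⟨(z : {x : V // x ≠ v}), (hA _).mp z.prop⟩ : ↥A))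
    (fun _ _ h => h) h

lemma reach_isolated {W : Type*} {H : SimpleGraph W} {s t : W} (hiso : ∀ z, ¬H.Adj s z)
    (h : H.Reachable s t) : s = t := by
  obtain ⟨p⟩ := h
  cases p with
  | nil => rfl
  | cons h _ => exact absurd h (hiso _)

lemma one_door {W : Type*} {H : SimpleGraph W} (u w : W)
    (hw : ∀ z, H.Adj u z → z = w) :
    ∀ {x y : W} (p : H.Walk x y), y ≠ u →
      ((x ≠ u → ∃ q : H.Walk x y, ∀ z ∈ q.support, z ≠ u) ∧
       (x = u → w ≠ u → ∃ q : H.Walk w y, ∀ z ∈ q.support, z ≠ u)) := by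
  intro x y p
  induction p with
  | nil =>
    intro hy
    refine ⟨fun hx => ⟨SimpleGraph.Walk.nil, ?_⟩, fun hx => absurd hx hy⟩
    intro z hz
    rw [SimpleGraph.Walk.support_nil, List.mem_singleton] at hz
    subst hz; exact hy
  | @cons x x1 y h p ih =>
    intro hy
    by_cases h1 : x1 = u
    · subst h1
      constructor
      · intro hx
        have hxw : x = w := hw x h.symm
        subst hxw
        exact (ih hy).2 rfl hx
      · intro hx
        exfalso; rw [hx] at h; exact H.loopless.irrefl _ h
    · rcases (ih hy).1 h1 with ⟨q, hq⟩
      constructor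
      · intro hx
        refine ⟨SimpleGraph.Walk.cons h q, ?_⟩
        intro z hz
        rw [SimpleGraph.Walk.support_cons, List.mem_cons] at hz
        rcases hz with rfl | hz
        · exact hx
        · exact hq z hz
      · intro hx
        have hx1w : x1 = w := hw x1 (hx ▸ h)
        subst hx1w
        exact fun _ => ⟨q, hq⟩

lemma key_iff {G : SimpleGraph V} {v : V} {A : Set V} {A' : Set {x : V // x ≠ v}}
    (hA : ∀ x : {x : V // x ≠ v}, x ∈ A' ↔ (x : V) ∈ A)
    (hcase : v ∉ A ∨ ∃ (hvA : v ∈ A), ∃ w : ↥A, ∀ z, (G.induce A).Adj ⟨v, hvA⟩ z → z = w)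
    (x y : ↥A') :
    (G.induce A).Reachable ⟨(x : {x : V // x ≠ v}), (hA _).mp x.prop⟩
      ⟨(y : {x : V // x ≠ v}), (hA _).mp y.prop⟩ ↔
    ((G.induce {x | x ≠ v}).induce A').Reachable x y := by
  constructor
  · intro h
    obtain ⟨p⟩ := h
    rcases hcase with hvA | ⟨hvA, w, hw⟩
    · have hs : ∀ z ∈ p.support, (z : V) ≠ v := fun z _ hzv => hvA (hzv ▸ z.prop)
      exact transfer_down hA p hs
    · have hx : (⟨((x : {x : V // x ≠ v}) : V), (hA _).mp x.prop⟩ : ↥A) ≠ ⟨v, hvA⟩ :=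
        fun hh => (x : {x : V // x ≠ v}).prop (congrArg Subtype.val hh)
      have hy : (⟨((y : {x : V // x ≠ v}) : V), (hA _).mp y.prop⟩ : ↥A) ≠ ⟨v, hvA⟩ :=
        fun hh => (y : {x : V // x ≠ v}).prop (congrArg Subtype.val hh)
      obtain ⟨q, hq⟩ := (one_door ⟨v, hvA⟩ w hw p hy).1 hx
      have hs : ∀ z ∈ q.support, (z : V) ≠ v :=
        fun z hz hzv => hq z hz (Subtype.ext hzv)
      exact transfer_down hA q hs
  · intro h
    exact transfer_up hA h

lemma freeStep {G : SimpleGraph V} {k : ℕ} {c : V → Fin k}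
    (hc : IsProperColoring G k c)
    (v : V) (z : Fin k) (hz : ∀ u, G.Adj v u → c u ≠ z) :
    KempeStep G k c (Function.update c v z) := by
  refine ⟨c v, z, ⟨v, Or.inl rfl⟩, ?_⟩
  have hiso : ∀ y : ↥{x : V | c x = c v ∨ c x = z},
      ¬ (G.induce {x : V | c x = c v ∨ c x = z}).Adj ⟨v, Or.inl rfl⟩ y := by
    intro y hadj
    have hGadj : G.Adj v (y : V) := hadj
    rcases y.prop with h1 | h1
    · exact hc hGadj h1.symm
    · exact hz _ hGadj h1
  intro x
  by_cases hx : c x = c v ∨ c x = z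
  · by_cases hxv : x = v
    · subst hxv
      rw [Function.update_self, dif_pos hx, if_pos (SimpleGraph.Reachable.refl _),
        Equiv.swap_apply_left]
    · have hnr : ¬ (G.induce {x : V | c x = c v ∨ c x = z}).Reachable ⟨v, Or.inl rfl⟩ ⟨x, hx⟩ :=
        fun hr => hxv (congrArg Subtype.val (reach_isolated hiso hr)).symm
      rw [Function.update_of_ne hxv, dif_pos hx, if_neg hnr]
  · rw [dif_neg hx, Function.update_of_ne (fun hxv => hx (by subst hxv; exact Or.inl rfl))]

lemma direct_lift {G : SimpleGraph V} {k : ℕ} {v : V} {c : V → Fin k}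
    (e : ↥{y : V | y ≠ v} → Fin k) (he : ∀ x : ↥{y : V | y ≠ v}, c (x : V) = e x)
    (a b : Fin k)
    (v0' : ↥{x : ↥{y : V | y ≠ v} | e x = a ∨ e x = b})
    (d₃ : ↥{y : V | y ≠ v} → Fin k)
    (hd₃ : ∀ x : ↥{y : V | y ≠ v}, d₃ x =
      if h : e x = a ∨ e x = b then
        if ((G.induce {y : V | y ≠ v}).induce {x : ↥{y : V | y ≠ v} | e x = a ∨ e x = b}).Reachable
            v0' ⟨x, h⟩
          then Equiv.swap a b (e x) else e x
      else e x)
    (hcase : v ∉ {x : V | c x = a ∨ c x = b} ∨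
      ∃ (hvA : v ∈ {x : V | c x = a ∨ c x = b}), ∃ w : ↥{x : V | c x = a ∨ c x = b},
        ∀ z, (G.induce {x : V | c x = a ∨ c x = b}).Adj ⟨v, hvA⟩ z → z = w) :
    ∃ c₃ : V → Fin k, KempeStep G k c c₃ ∧ ∀ x : ↥{y : V | y ≠ v}, c₃ (x : V) = d₃ x := by
  classical
  have hA : ∀ x : ↥{y : V | y ≠ v},
      x ∈ {x : ↥{y : V | y ≠ v} | e x = a ∨ e x = b} ↔
        (x : V) ∈ {x : V | c x = a ∨ c x = b} := by
    intro x
    constructor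
    · intro h; rw [Set.mem_setOf_eq, he x]; exact h
    · intro h; rw [Set.mem_setOf_eq] at h; rw [he x] at h; exact h
  let v0 : ↥{x : V | c x = a ∨ c x = b} :=
    ⟨((v0' : ↥{y : V | y ≠ v}) : V), (hA _).mp v0'.prop⟩
  refine ⟨fun y => if h : c y = a ∨ c y = b then
      if (G.induce {x : V | c x = a ∨ c x = b}).Reachable v0 ⟨y, h⟩
        then Equiv.swap a b (c y) else c y
    else c y, ⟨a, b, v0, fun _ => rfl⟩, ?_⟩
  intro x
  beta_reduce
  rw [hd₃ x]
  by_cases h : e x = a ∨ e x = b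
  · have h' : c (x : V) = a ∨ c (x : V) = b := by rw [he x]; exact h
    rw [dif_pos h, dif_pos h']
    refine if_congr ?_ (by rw [he x]) (he x)
    exact key_iff hA hcase v0' ⟨x, h⟩
  · have h' : ¬(c (x : V) = a ∨ c (x : V) = b) := by rw [he x]; exact h
    rw [dif_neg h, dif_neg h']
    exact he x

lemma lift_step {G : SimpleGraph V} [Fintype V] {k d : ℕ} (hk : d + 1 ≤ k) {v : V}
    (hdegv : (G.neighborSet v).ncard ≤ d) {c : V → Fin k} (hc : IsProperColoring G k c)
    {d₃ : ↥{y : V | y ≠ v} → Fin k}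
    (hstep : KempeStep (G.induce {y : V | y ≠ v}) k (fun x => c (x : V)) d₃) :
    ∃ c₃ : V → Fin k, IsProperColoring G k c₃ ∧ (∀ x : ↥{y : V | y ≠ v}, c₃ (x : V) = d₃ x) ∧
      KempeEquiv G k c c₃ := by
  classical
  obtain ⟨a, b, v0', hd₃⟩ := hstep
  by_cases hv : c v = a ∨ c v = b
  · by_cases hfree : ∃ z : Fin k, (∀ u, G.Adj v u → c u ≠ z) ∧ ¬(z = a ∨ z = b)
    · obtain ⟨z, hzfree, hzab⟩ := hfree
      have hstep1 : KempeStep G k c (Function.update c v z) := freeStep hc v z hzfree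
      have hc₂p : IsProperColoring G k (Function.update c v z) := kempeStep_proper hc hstep1
      have hupd : ∀ x : ↥{y : V | y ≠ v}, Function.update c v z (x : V) = c (x : V) :=
        fun x => Function.update_of_ne x.prop _ _
      obtain ⟨c₃, hstep3, hform⟩ := direct_lift (c := Function.update c v z)
        (fun x => c (x : V)) hupd a b v0' d₃ hd₃
        (Or.inl (fun hh => hzab (by
          have hh' : Function.update c v z v = a ∨ Function.update c v z v = b := hh
          rwa [Function.update_self] at hh')))
      exact ⟨c₃, kempeStep_proper hc₂p hstep3, hform,
        Relation.ReflTransGen.head hstep1 (Relation.ReflTransGen.single hstep3)⟩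
    · push_neg at hfree
      have hne1 : ∀ w1 : V, G.Adj v w1 → c w1 ≠ c v := fun w1 h1 hh => hc h1 hh.symm
      have huniq : ∀ w1 w2 : V, G.Adj v w1 → G.Adj v w2 → (c w1 = a ∨ c w1 = b) →
          (c w2 = a ∨ c w2 = b) → w1 = w2 := by
        intro w1 w2 h1 h2 hc1 hc2
        by_contra hne
        have hcw : c w1 = c w2 := by
          rcases hv with hv' | hv' <;> rcases hc1 with h1' | h1' <;> rcases hc2 with h2' | h2' <;>
            first
              | (exfalso; apply hne1 w1 h1; rw [h1', hv']; done)
              | (exfalso; apply hne1 w2 h2; rw [h2', hv']; done)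
              | (rw [h1', h2']; done)
        have hcover : ({(c v)}ᶜ : Set (Fin k)) ⊆ c '' G.neighborSet v := by
          intro y hy
          by_contra hyim
          have hyab : y = a ∨ y = b := hfree y (fun u hu hcu => hyim ⟨u, hu, hcu⟩)
          have hyw1 : y = c w1 := by
            rcases hv with hv' | hv' <;> rcases hyab with rfl | rfl <;>
              rcases hc1 with h1' | h1' <;>
              first
                | (exfalso; apply hy; rw [Set.mem_singleton_iff, hv']; done)
                | (exfalso; apply hne1 w1 h1; rw [h1', hv']; done)
                | (rw [h1']; done)
          exact hyim ⟨w1, h1, hyw1.symm⟩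
        have hb1 : (k - 1 : ℕ) ≤ (c '' G.neighborSet v).ncard := by
          have hcs : ({(c v)}ᶜ : Set (Fin k)).ncard = k - 1 := by
            rw [Set.compl_eq_univ_diff, Set.ncard_diff (Set.subset_univ _),
              Set.ncard_univ, Set.ncard_singleton, Nat.card_eq_fintype_card, Fintype.card_fin]
          rw [← hcs]
          exact Set.ncard_le_ncard hcover (Set.toFinite _)
        have himeq : c '' G.neighborSet v = c '' (G.neighborSet v \ {w2}) := by
          apply Set.Subset.antisymm
          · rintro y ⟨u, hu, rfl⟩
            by_cases hu2 : u = w2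
            · exact ⟨w1, ⟨h1, hne⟩, by rw [hcw, ← hu2]⟩
            · exact ⟨u, ⟨hu, hu2⟩, rfl⟩
          · exact Set.image_mono Set.diff_subset
        have hb2 : (c '' (G.neighborSet v \ {w2})).ncard ≤ d - 1 := by
          calc (c '' (G.neighborSet v \ {w2})).ncard ≤ (G.neighborSet v \ {w2}).ncard :=
                Set.ncard_image_le (Set.toFinite _)
            _ = (G.neighborSet v).ncard - 1 :=
                Set.ncard_diff_singleton_of_mem h2
            _ ≤ d - 1 := Nat.sub_le_sub_right hdegv 1
        have hd1 : 0 < (G.neighborSet v).ncard :=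
          (Set.ncard_pos (Set.toFinite _)).mpr ⟨w1, h1⟩
        rw [himeq] at hb1
        have := le_trans hb1 hb2
        omega
      have hcase : v ∉ {x : V | c x = a ∨ c x = b} ∨
          ∃ (hvA : v ∈ {x : V | c x = a ∨ c x = b}), ∃ w : ↥{x : V | c x = a ∨ c x = b},
            ∀ z, (G.induce {x : V | c x = a ∨ c x = b}).Adj ⟨v, hvA⟩ z → z = w := by
        refine Or.inr ⟨hv, ?_⟩
        by_cases hexw : ∃ w : V, G.Adj v w ∧ (c w = a ∨ c w = b)
        · obtain ⟨w, hwadj, hwc⟩ := hexw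
          refine ⟨⟨w, hwc⟩, fun z hz => ?_⟩
          exact Subtype.ext (huniq z.val w (by exact hz) hwadj z.prop hwc)
        · push_neg at hexw
          refine ⟨⟨((v0' : ↥{y : V | y ≠ v}) : V), v0'.prop⟩, fun z hz => ?_⟩
          have hadj : G.Adj v z.val := hz
          rcases z.prop with h' | h'
          · exact absurd h' (hexw z.val hadj).1
          · exact absurd h' (hexw z.val hadj).2
      obtain ⟨c₃, hstep3, hform⟩ := direct_lift (fun x => c (x : V)) (fun _ => rfl)
        a b v0' d₃ hd₃ hcase
      exact ⟨c₃, kempeStep_proper hc hstep3, hform, Relation.ReflTransGen.single hstep3⟩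
  · obtain ⟨c₃, hstep3, hform⟩ := direct_lift (fun x => c (x : V)) (fun _ => rfl)
      a b v0' d₃ hd₃ (Or.inl hv)
    exact ⟨c₃, kempeStep_proper hc hstep3, hform, Relation.ReflTransGen.single hstep3⟩

lemma lift_chain {G : SimpleGraph V} [Fintype V] {k d : ℕ} (hk : d + 1 ≤ k) {v : V}
    (hdegv : (G.neighborSet v).ncard ≤ d) {c : V → Fin k} (hc : IsProperColoring G k c)
    {e : ↥{y : V | y ≠ v} → Fin k}
    (h : Relation.ReflTransGen (KempeStep (G.induce {y : V | y ≠ v}) k)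
      (fun x => c (x : V)) e) :
    ∃ c₂ : V → Fin k, IsProperColoring G k c₂ ∧ (∀ x : ↥{y : V | y ≠ v}, c₂ (x : V) = e x) ∧
      KempeEquiv G k c c₂ := by
  induction h with
  | refl => exact ⟨c, hc, fun _ => rfl, Relation.ReflTransGen.refl⟩
  | @tail mid e' hsteps hstep ih =>
    obtain ⟨c₂, hc₂, hr₂, hequiv⟩ := ih
    have hmid : (fun x : ↥{y : V | y ≠ v} => c₂ (x : V)) = mid := funext hr₂
    obtain ⟨c₃, hc₃, hr₃, hequiv'⟩ := lift_step hk hdegv hc₂ (by rw [hmid]; exact hstep)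
    exact ⟨c₃, hc₃, hr₃, hequiv.trans hequiv'⟩

lemma degenerate_induce [Finite V] {G : SimpleGraph V} {d : ℕ} (hdeg : Degenerate G d) (s : Set V) :
    Degenerate (G.induce s) d := by
  intro T hT
  obtain ⟨t, ht⟩ := hT
  obtain ⟨w, hwmem, hw⟩ := hdeg (Subtype.val '' T) ⟨t.val, ⟨t, ht, rfl⟩⟩
  obtain ⟨w₀, hw₀T, rfl⟩ := hwmem
  refine ⟨w₀, hw₀T, ?_⟩
  rw [← Set.ncard_image_of_injective (T ∩ (G.induce s).neighborSet w₀) Subtype.val_injective]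
  apply le_trans (Set.ncard_le_ncard ?_ (Set.toFinite _)) hw
  rintro y ⟨z, ⟨hzT, hzN⟩, rfl⟩
  exact ⟨⟨z, hzT, rfl⟩, hzN⟩

universe u

lemma main_aux (d k : ℕ) (hk : d + 1 ≤ k) :
    ∀ n : ℕ, ∀ {W : Type u} [Fintype W], Fintype.card W ≤ n →
      ∀ G : SimpleGraph W, Degenerate G d → KempeClass G k := by
  intro n
  induction n with
  | zero =>
    intro W _ hcard G hdeg c c' hc hc'
    have hempty : IsEmpty W := Fintype.card_eq_zero_iff.mp (le_antisymm hcard (Nat.zero_le _))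
    have : c = c' := funext fun x => (hempty.false x).elim
    rw [this]
    exact Relation.ReflTransGen.refl
  | succ n ih =>
    intro W _ hcard G hdeg c c' hc hc'
    cases isEmpty_or_nonempty W with
    | inl h =>
      have : c = c' := funext fun x => (h.false x).elim
      rw [this]
      exact Relation.ReflTransGen.refl
    | inr h =>
      obtain ⟨v, -, hdegv⟩ := hdeg Set.univ Set.univ_nonempty
      rw [Set.univ_inter] at hdegv
      have hcardS : Fintype.card ↥{y : W | y ≠ v} ≤ n := by
        have hlt : Fintype.card ↥{y : W | y ≠ v} < Fintype.card W := by
          apply Fintype.card_lt_of_injective_of_notMem Subtype.val Subtype.val_injective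
            (b := v)
          intro hmem
          obtain ⟨⟨x, hx⟩, hxe⟩ := hmem
          exact hx hxe
        omega
      have hdeg' : Degenerate (G.induce {y : W | y ≠ v}) d := degenerate_induce hdeg _
      have hcr : IsProperColoring (G.induce {y : W | y ≠ v}) k (fun x => c (x : W)) :=
        fun u w hadj => hc (by exact hadj)
      have hc'r : IsProperColoring (G.induce {y : W | y ≠ v}) k (fun x => c' (x : W)) :=
        fun u w hadj => hc' (by exact hadj)
      have hchain := ih hcardS (G.induce {y : W | y ≠ v}) hdeg'
        (fun x => c (x : W)) (fun x => c' (x : W)) hcr hc'r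
      obtain ⟨c₂, hc₂, hr₂, hequiv⟩ := lift_chain hk hdegv hc hchain
      have hfin : ∀ u, G.Adj v u → c₂ u ≠ c' v := by
        intro u hu hh
        have huv : u ≠ v := fun he => G.loopless.irrefl v (he ▸ hu)
        have hcu : c₂ u = c' u := hr₂ ⟨u, huv⟩
        exact hc' hu.symm (by rw [← hcu, hh])
      have hstep := freeStep hc₂ v (c' v) hfin
      have hupd : Function.update c₂ v (c' v) = c' := by
        funext x
        by_cases hx : x = v
        · subst hx; rw [Function.update_self]
        · rw [Function.update_of_ne hx]; exact hr₂ ⟨x, hx⟩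
      exact hequiv.tail (hupd ▸ hstep)

theorem stmt1 {V : Type*} [Fintype V] (d k : ℕ) (hk : d + 1 ≤ k) (G : SimpleGraph V)
    (hdeg : Degenerate G d) : KempeClass G k :=
  main_aux d k hk (Fintype.card V) le_rfl G hdeg
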